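/- Let t ≥ 0 and Q, R, S ∈ ℝ. Then |∫₀ᵗ e^{isQ} (∫₀ˢ e^{is₁R} (∫₀^{s₁} e^{is₂S} ds₂) ds₁) ds − t³/6| ≤ (|Q| + |R| + |S|) · t⁴/8. -/

import Mathlib

open MeasureTheory

lemma expI_norm (x : ℝ) : ‖Complex.exp (Complex.I * x) - 1‖ ≤ |x| := by
  have h0 : Complex.exp (Complex.I * x) - 1 =
      Complex.I * ∫ s in (0:ℝ)..x, Complex.exp (Complex.I * s) := by
    rw [integral_exp_mul_complex Complex.I_ne_zero]
    simp only [Complex.ofReal_zero, mul_zero, Complex.exp_zero]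
    field_simp
  rw [h0, norm_mul, Complex.norm_I, one_mul]
  calc ‖∫ s in (0:ℝ)..x, Complex.exp (Complex.I * s)‖ ≤ 1 * |x - 0| := by
        apply intervalIntegral.norm_integral_le_of_norm_le_const
        intro y _
        rw [mul_comm]
        exact le_of_eq (Complex.norm_exp_ofReal_mul_I y)
    _ = |x| := by rw [sub_zero, one_mul]

lemma expI_norm_eq (x : ℝ) : ‖Complex.exp (Complex.I * x)‖ = 1 := by
  rw [mul_comm]; exact Complex.norm_exp_ofReal_mul_I x

theorem triple_iterated_oscillatory_error (t Q R S : ℝ) (ht : 0 ≤ t) :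
    ‖(∫ s in (0:ℝ)..t, Complex.exp (Complex.I * ((s : ℂ) * (Q : ℂ))) *
          ∫ s₁ in (0:ℝ)..s, Complex.exp (Complex.I * ((s₁ : ℂ) * (R : ℂ))) *
            ∫ s₂ in (0:ℝ)..s₁, Complex.exp (Complex.I * ((s₂ : ℂ) * (S : ℂ)))) -
        ((t : ℂ) ^ 3 / 6)‖ ≤ (|Q| + |R| + |S|) * t ^ 4 / 8 := by
  -- continuity facts
  have hcS : Continuous fun s₂ : ℝ => Complex.exp (Complex.I * ((s₂ : ℂ) * (S : ℂ))) := by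
    fun_prop
  have hJcont : Continuous fun s₁ : ℝ =>
      ∫ s₂ in (0:ℝ)..s₁, Complex.exp (Complex.I * ((s₂ : ℂ) * (S : ℂ))) :=
    intervalIntegral.continuous_primitive (fun a b => hcS.intervalIntegrable a b) 0
  have hcR : Continuous fun s₁ : ℝ => Complex.exp (Complex.I * ((s₁ : ℂ) * (R : ℂ))) := by
    fun_prop
  have hMint : Continuous fun s₁ : ℝ =>
      Complex.exp (Complex.I * ((s₁ : ℂ) * (R : ℂ))) *
        ∫ s₂ in (0:ℝ)..s₁, Complex.exp (Complex.I * ((s₂ : ℂ) * (S : ℂ))) :=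
    hcR.mul hJcont
  -- inner bound
  have hInner : ∀ s₁ : ℝ, 0 ≤ s₁ →
      ‖(∫ s₂ in (0:ℝ)..s₁, Complex.exp (Complex.I * ((s₂ : ℂ) * (S : ℂ)))) - (s₁ : ℂ)‖
        ≤ |S| * s₁ ^ 2 / 2 := by
    intro s₁ hs₁
    have h1 : (s₁ : ℂ) = ∫ _ in (0:ℝ)..s₁, (1 : ℂ) := by simp
    rw [h1, ← intervalIntegral.integral_sub (hcS.intervalIntegrable _ _)
      intervalIntegrable_const]
    have hb : ‖∫ s₂ in (0:ℝ)..s₁,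
        (Complex.exp (Complex.I * ((s₂ : ℂ) * (S : ℂ))) - 1)‖
        ≤ |∫ s₂ in (0:ℝ)..s₁, |S| * s₂| := by
      apply intervalIntegral.norm_integral_le_abs_of_norm_le
      · filter_upwards [ae_restrict_mem measurableSet_uIoc] with y hy
        rw [Set.uIoc_of_le hs₁] at hy
        have : ((y : ℂ) * (S : ℂ)) = ((y * S : ℝ) : ℂ) := by push_cast; ring
        rw [this]
        calc ‖Complex.exp (Complex.I * ((y * S : ℝ) : ℂ)) - 1‖ ≤ |y * S| := expI_norm _
          _ = |S| * y := by rw [abs_mul, abs_of_pos hy.1]; ring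
      · exact (continuous_const.mul continuous_id).intervalIntegrable _ _
    refine hb.trans (le_of_eq ?_)
    rw [intervalIntegral.integral_const_mul, integral_id]
    rw [show (s₁ ^ 2 - 0 ^ 2) / 2 = s₁ ^ 2 / 2 by ring, abs_of_nonneg (by positivity)]
    ring
  -- middle bound
  have hMid : ∀ s : ℝ, 0 ≤ s →
      ‖(∫ s₁ in (0:ℝ)..s, Complex.exp (Complex.I * ((s₁ : ℂ) * (R : ℂ))) *
          ∫ s₂ in (0:ℝ)..s₁, Complex.exp (Complex.I * ((s₂ : ℂ) * (S : ℂ)))) -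
        ((s : ℂ) ^ 2 / 2)‖ ≤ (|R| + |S| / 2) * s ^ 3 / 3 := by
    intro s hs
    have h1 : ((s : ℂ) ^ 2 / 2) = ∫ s₁ in (0:ℝ)..s, ((s₁ : ℝ) : ℂ) := by
      rw [intervalIntegral.integral_ofReal, integral_id]
      push_cast; ring
    rw [h1, ← intervalIntegral.integral_sub (hMint.intervalIntegrable _ _)
      ((by fun_prop : Continuous fun s₁ : ℝ => ((s₁ : ℝ) : ℂ)).intervalIntegrable _ _)]
    have hb : ‖∫ s₁ in (0:ℝ)..s,
        (Complex.exp (Complex.I * ((s₁ : ℂ) * (R : ℂ))) *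
          (∫ s₂ in (0:ℝ)..s₁, Complex.exp (Complex.I * ((s₂ : ℂ) * (S : ℂ)))) - (s₁ : ℂ))‖
        ≤ |∫ s₁ in (0:ℝ)..s, (|R| + |S| / 2) * s₁ ^ 2| := by
      apply intervalIntegral.norm_integral_le_abs_of_norm_le
      · filter_upwards [ae_restrict_mem measurableSet_uIoc] with y hy
        rw [Set.uIoc_of_le hs] at hy
        have hy0 : 0 ≤ y := hy.1.le
        set J := ∫ s₂ in (0:ℝ)..y, Complex.exp (Complex.I * ((s₂ : ℂ) * (S : ℂ))) with hJ
        set e := Complex.exp (Complex.I * ((y : ℂ) * (R : ℂ))) with he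
        have hsplit : e * J - (y : ℂ) = e * (J - (y : ℂ)) + (e - 1) * (y : ℂ) := by ring
        rw [hsplit]
        have hcast : ((y : ℂ) * (R : ℂ)) = ((y * R : ℝ) : ℂ) := by push_cast; ring
        have hne : ‖e‖ = 1 := by rw [he, hcast]; exact expI_norm_eq _
        have h2 : ‖(e - 1) * (y : ℂ)‖ ≤ (|R| * y) * y := by
          rw [norm_mul, Complex.norm_real, Real.norm_eq_abs, abs_of_nonneg hy0]
          apply mul_le_mul_of_nonneg_right _ hy0
          rw [he, hcast]
          calc ‖Complex.exp (Complex.I * ((y * R : ℝ) : ℂ)) - 1‖ ≤ |y * R| := expI_norm _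
            _ = |R| * y := by rw [abs_mul, abs_of_nonneg hy0]; ring
        calc ‖e * (J - (y : ℂ)) + (e - 1) * (y : ℂ)‖
            ≤ ‖e * (J - (y : ℂ))‖ + ‖(e - 1) * (y : ℂ)‖ := norm_add_le _ _
          _ ≤ |S| * y ^ 2 / 2 + |R| * y * y := by
              rw [norm_mul, hne, one_mul]
              exact add_le_add (hInner y hy0) (h2)
          _ ≤ (|R| + |S| / 2) * y ^ 2 := by nlinarith [abs_nonneg R, abs_nonneg S]
      · exact (continuous_const.mul (continuous_pow 2)).intervalIntegrable _ _
    refine hb.trans (le_of_eq ?_)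
    have hip : ∫ s₁ in (0:ℝ)..s, s₁ ^ 2 = s ^ 3 / 3 := by rw [integral_pow]; norm_num
    rw [intervalIntegral.integral_const_mul, hip,
      abs_of_nonneg (mul_nonneg (by positivity) (div_nonneg (pow_nonneg hs 3) (by norm_num)))]
    ring
  -- outer
  have h1 : ((t : ℂ) ^ 3 / 6) = ∫ s in (0:ℝ)..t, (((s ^ 2 / 2 : ℝ)) : ℂ) := by
    have : (fun s : ℝ => (((s ^ 2 / 2 : ℝ)) : ℂ)) = fun s : ℝ => (((s ^ 2 / 2 : ℝ) : ℂ)) := rfl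
    rw [intervalIntegral.integral_ofReal]
    have : ∫ s in (0:ℝ)..t, s ^ 2 / 2 = t ^ 3 / 6 := by
      simp [intervalIntegral.integral_div, integral_pow]
      ring
    rw [this]; push_cast; ring
  have hMcont : Continuous fun s : ℝ =>
      ∫ s₁ in (0:ℝ)..s, Complex.exp (Complex.I * ((s₁ : ℂ) * (R : ℂ))) *
        ∫ s₂ in (0:ℝ)..s₁, Complex.exp (Complex.I * ((s₂ : ℂ) * (S : ℂ))) :=
    intervalIntegral.continuous_primitive (fun a b => hMint.intervalIntegrable a b) 0
  have hcQ : Continuous fun s : ℝ => Complex.exp (Complex.I * ((s : ℂ) * (Q : ℂ))) := by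
    fun_prop
  have hFint : Continuous fun s : ℝ =>
      Complex.exp (Complex.I * ((s : ℂ) * (Q : ℂ))) *
        ∫ s₁ in (0:ℝ)..s, Complex.exp (Complex.I * ((s₁ : ℂ) * (R : ℂ))) *
          ∫ s₂ in (0:ℝ)..s₁, Complex.exp (Complex.I * ((s₂ : ℂ) * (S : ℂ))) :=
    hcQ.mul hMcont
  rw [h1, ← intervalIntegral.integral_sub (hFint.intervalIntegrable _ _)
    ((by fun_prop : Continuous fun s : ℝ => (((s ^ 2 / 2 : ℝ)) : ℂ)).intervalIntegrable _ _)]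
  have hb : ‖∫ s in (0:ℝ)..t,
      (Complex.exp (Complex.I * ((s : ℂ) * (Q : ℂ))) *
        (∫ s₁ in (0:ℝ)..s, Complex.exp (Complex.I * ((s₁ : ℂ) * (R : ℂ))) *
          ∫ s₂ in (0:ℝ)..s₁, Complex.exp (Complex.I * ((s₂ : ℂ) * (S : ℂ)))) -
        (((s ^ 2 / 2 : ℝ)) : ℂ))‖
      ≤ |∫ s in (0:ℝ)..t, ((|R| + |S| / 2) / 3 + |Q| / 2) * s ^ 3| := by
    apply intervalIntegral.norm_integral_le_abs_of_norm_le
    · filter_upwards [ae_restrict_mem measurableSet_uIoc] with y hy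
      rw [Set.uIoc_of_le ht] at hy
      have hy0 : 0 ≤ y := hy.1.le
      set M := ∫ s₁ in (0:ℝ)..y, Complex.exp (Complex.I * ((s₁ : ℂ) * (R : ℂ))) *
        ∫ s₂ in (0:ℝ)..s₁, Complex.exp (Complex.I * ((s₂ : ℂ) * (S : ℂ))) with hM
      set e := Complex.exp (Complex.I * ((y : ℂ) * (Q : ℂ))) with he
      have hsplit : e * M - (((y ^ 2 / 2 : ℝ)) : ℂ) =
          e * (M - (((y ^ 2 / 2 : ℝ)) : ℂ)) + (e - 1) * (((y ^ 2 / 2 : ℝ)) : ℂ) := by ring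
      rw [hsplit]
      have hcast : ((y : ℂ) * (Q : ℂ)) = ((y * Q : ℝ) : ℂ) := by push_cast; ring
      have hne : ‖e‖ = 1 := by rw [he, hcast]; exact expI_norm_eq _
      have hMb : ‖M - (((y ^ 2 / 2 : ℝ)) : ℂ)‖ ≤ (|R| + |S| / 2) * y ^ 3 / 3 := by
        have := hMid y hy0
        have hc2 : (((y ^ 2 / 2 : ℝ)) : ℂ) = ((y : ℂ) ^ 2 / 2) := by push_cast; ring
        rw [hc2]; exact this
      have h2 : ‖(e - 1) * (((y ^ 2 / 2 : ℝ)) : ℂ)‖ ≤ (|Q| * y) * (y ^ 2 / 2) := by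
        rw [norm_mul, Complex.norm_real, Real.norm_eq_abs, abs_of_nonneg (by positivity)]
        apply mul_le_mul_of_nonneg_right _ (by positivity)
        rw [he, hcast]
        calc ‖Complex.exp (Complex.I * ((y * Q : ℝ) : ℂ)) - 1‖ ≤ |y * Q| := expI_norm _
          _ = |Q| * y := by rw [abs_mul, abs_of_nonneg hy0]; ring
      calc ‖e * (M - (((y ^ 2 / 2 : ℝ)) : ℂ)) + (e - 1) * (((y ^ 2 / 2 : ℝ)) : ℂ)‖
          ≤ ‖e * (M - (((y ^ 2 / 2 : ℝ)) : ℂ))‖ + ‖(e - 1) * (((y ^ 2 / 2 : ℝ)) : ℂ)‖ :=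
            norm_add_le _ _
        _ ≤ (|R| + |S| / 2) * y ^ 3 / 3 + |Q| * y * (y ^ 2 / 2) := by
            rw [norm_mul, hne, one_mul]
            exact add_le_add hMb h2
        _ ≤ ((|R| + |S| / 2) / 3 + |Q| / 2) * y ^ 3 := by nlinarith [abs_nonneg Q]
    · exact (continuous_const.mul (continuous_pow 3)).intervalIntegrable _ _
  refine hb.trans ?_
  have hip : ∫ s in (0:ℝ)..t, s ^ 3 = t ^ 4 / 4 := by rw [integral_pow]; norm_num
  rw [intervalIntegral.integral_const_mul, hip,
    abs_of_nonneg (mul_nonneg (by positivity) (div_nonneg (pow_nonneg ht 4) (by norm_num)))]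
  nlinarith [abs_nonneg Q, abs_nonneg R, abs_nonneg S, pow_nonneg ht 4]
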